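/- Let X be a finite set, T a stochastic matrix on X, L the associated generator, Γ the carré du champ operator, and π a fully supported probability measure on X with πT = π. Assume the non-negative curvature condition: for all t ≥ 0 and all g : X → ℝ, Γ(exp(tL)g) ≤ exp(tL)(Γg) pointwise. Fix o ∈ X, let μ_s = δ_o·exp(sL) and f_s = μ_s/π. Fix t > 0 and assume f_t(x) > 0 for all x ∈ X. Then ∑_x π(x) f_t(x)·(L log f_t)(x) ≤ - Varent(μ_t) / (2t·(1 + Lip(log f_t))), where Varent(μ_t) = ∑_x π(x) f_t(x)(log f_t(x))² - (∑_x π(x) f_t(x) log f_t(x))² and Lip(g) = max{|g(x) - g(y)| : T(x,y) > 0}. In particular, since ∑_x π(x) f_t(x)(L log f_t)(x) is the time derivative of the entropy s ↦ Ent(μ_s) at s = t, the derivative of the entropy at time t is at most -Varent(μ_t)/(2t(1 + Lip(log f_t))). -/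

import Mathlib

variable {X : Type*}

/-- `T` is a stochastic matrix: nonnegative entries and unit row sums. -/
def IsStochastic [Fintype X] (T : X → X → ℝ) : Prop :=
  (∀ x y, 0 ≤ T x y) ∧ ∀ x, ∑ y, T x y = 1

/-- The generator: `(L f)(x) = ∑_y T(x,y) (f(y) - f(x))`. -/
noncomputable def gen [Fintype X] (T : X → X → ℝ) (f : X → ℝ) : X → ℝ :=
  fun x => ∑ y, T x y * (f y - f x)

/-- The carré du champ operator: `(Γ f)(x) = (1/2) ∑_y T(x,y) (f(y) - f(x))²`. -/
noncomputable def carre [Fintype X] (T : X → X → ℝ) (f : X → ℝ) : X → ℝ :=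
  fun x => (1 / 2) * ∑ y, T x y * (f y - f x) ^ 2

/-- The generator as a matrix: `L = T - Id`. -/
noncomputable def genMat [Fintype X] [DecidableEq X] (T : X → X → ℝ) : Matrix X X ℝ :=
  fun x y => T x y - if x = y then 1 else 0

/-- The heat semigroup `P_t = exp (t L)` (matrix exponential). -/
noncomputable def heatSG [Fintype X] [DecidableEq X] (T : X → X → ℝ) (t : ℝ) : Matrix X X ℝ :=
  NormedSpace.exp (t • genMat T)

/-- Evolution of a measure (row vector) `μ_t = μ · exp (t L)`. -/
noncomputable def evolve [Fintype X] [DecidableEq X] (T : X → X → ℝ) (μ : X → ℝ) (t : ℝ) :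
    X → ℝ :=
  Matrix.vecMul μ (heatSG T t)

/-- The Lipschitz constant along edges: `Lip(g) = max {|g(x) - g(y)| : T(x,y) > 0}`. -/
noncomputable def Lip [Fintype X] (T : X → X → ℝ) (g : X → ℝ) : ℝ :=
  sSup {r | ∃ x y, 0 < T x y ∧ r = |g x - g y|}

/-- The point mass at `o`. -/
noncomputable def dirac [DecidableEq X] (o : X) : X → ℝ := fun x => if x = o then 1 else 0


section AuxLemmas
open NormedSpace

/-- Scalar inequality: `u²/2 ≤ (1+|u|)(eᵘ - 1 - u)`. -/
lemma scalar_ineq (u : ℝ) : u ^ 2 / 2 ≤ (1 + |u|) * (Real.exp u - 1 - u) := by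
  rcases le_or_gt 0 u with hu | hu
  · rw [abs_of_nonneg hu]
    have h := Real.quadratic_le_exp_of_nonneg hu
    nlinarith [Real.add_one_le_exp u]
  · rw [abs_of_neg hu]
    set φ : ℝ → ℝ := fun v => (1 + v) * (Real.exp (-v) - 1 + v) - v ^ 2 / 2 with hφ
    have hderiv : ∀ v : ℝ, HasDerivAt φ (v * (1 - Real.exp (-v))) v := by
      intro v
      have h1 : HasDerivAt (fun v : ℝ => Real.exp (-v)) (-Real.exp (-v)) v := by
        simpa using (hasDerivAt_neg v).exp
      have h2 : HasDerivAt (fun v : ℝ => (1 + v) * (Real.exp (-v) - 1 + v))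
          (1 * (Real.exp (-v) - 1 + v) + (1 + v) * (-Real.exp (-v) + 1)) v :=
        (((hasDerivAt_id v).const_add 1)).mul (((h1.sub_const 1)).add (hasDerivAt_id v))
      have h3 : HasDerivAt (fun v : ℝ => v ^ 2 / 2) v v := by
        simpa using ((hasDerivAt_pow 2 v).div_const 2)
      have := h2.sub h3
      exact this.congr_deriv (by ring)
    have hmono : MonotoneOn φ (Set.Ici (0 : ℝ)) := by
      refine monotoneOn_of_deriv_nonneg (convex_Ici 0)
        (Continuous.continuousOn (by fun_prop)) ?_ ?_
      · exact fun v _ => (hderiv v).differentiableAt.differentiableWithinAt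
      · intro v hv
        rw [(hderiv v).deriv]
        rw [interior_Ici] at hv
        have : Real.exp (-v) ≤ 1 := Real.exp_le_one_iff.mpr (by linarith [hv.out])
        nlinarith [hv.out]
    have h0 : φ 0 = 0 := by simp [hφ]
    have := hmono (Set.self_mem_Ici) (show -u ∈ Set.Ici (0:ℝ) by simp; linarith) (by linarith)
    rw [h0] at this
    simp only [hφ, neg_neg] at this
    nlinarith [this]

variable [Fintype X] [DecidableEq X]

attribute [local instance] Matrix.linftyOpNormedRing Matrix.linftyOpNormedAlgebra

/-- Evaluation of a matrix entry as a continuous linear map. -/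
noncomputable def entryCLM (x y : X) : Matrix X X ℝ →L[ℝ] ℝ :=
  LinearMap.toContinuousLinearMap
    ((LinearMap.proj y).comp (LinearMap.proj (R := ℝ) (φ := fun _ : X => X → ℝ) x))

lemma entryCLM_apply (x y : X) (M : Matrix X X ℝ) : entryCLM x y M = M x y := rfl

lemma heatSG_zero (T : X → X → ℝ) : heatSG T 0 = 1 := by
  simp [heatSG, exp_zero]

lemma heatSG_mul (T : X → X → ℝ) (a b : ℝ) :
    heatSG T a * heatSG T b = heatSG T (a + b) := by
  rw [heatSG, heatSG, heatSG, add_smul]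
  exact (Matrix.exp_add_of_commute _ _
    (((Commute.refl (genMat T)).smul_left a).smul_right b)).symm

lemma hasDerivAt_heatSG_entry (T : X → X → ℝ) (x y : X) (s : ℝ) :
    HasDerivAt (fun u : ℝ => heatSG T u x y) ((genMat T * heatSG T s) x y) s :=
  (entryCLM x y).hasFDerivAt.comp_hasDerivAt s (hasDerivAt_exp_smul_const' (genMat T) s)

lemma heatSG_comm (T : X → X → ℝ) (s : ℝ) :
    genMat T * heatSG T s = heatSG T s * genMat T :=
  (hasDerivAt_exp_smul_const' (genMat T) s).unique (hasDerivAt_exp_smul_const (genMat T) s)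

lemma pow_entry_nonneg {A : Matrix X X ℝ} (hA : ∀ i j, 0 ≤ A i j) :
    ∀ (n : ℕ) (i j : X), 0 ≤ (A ^ n) i j := by
  intro n
  induction n with
  | zero => intro i j; simp [Matrix.one_apply]; positivity
  | succ n ih =>
    intro i j
    rw [pow_succ, Matrix.mul_apply]
    exact Finset.sum_nonneg fun k _ => mul_nonneg (ih i k) (hA k j)

lemma heatSG_entry_nonneg {T : X → X → ℝ} (hT : IsStochastic T) {s : ℝ} (hs : 0 ≤ s)
    (x y : X) : 0 ≤ heatSG T s x y := by
  have hdec : s • genMat T = s • (Matrix.of T) + (-s) • (1 : Matrix X X ℝ) := by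
    ext i j
    simp [genMat, Matrix.one_apply, Matrix.add_apply, Matrix.smul_apply]
    split <;> ring
  have hcomm : Commute (s • (Matrix.of T)) ((-s) • (1 : Matrix X X ℝ)) :=
    (((Commute.one_right (Matrix.of T)).smul_left s).smul_right (-s))
  have h1 : heatSG T s = exp (s • (Matrix.of T)) * exp ((-s) • (1 : Matrix X X ℝ)) := by
    rw [heatSG, hdec]
    exact Matrix.exp_add_of_commute _ _ hcomm
  have h2 : exp ((-s) • (1 : Matrix X X ℝ)) = Real.exp (-s) • (1 : Matrix X X ℝ) := by
    rw [← Algebra.algebraMap_eq_smul_one, Real.exp_eq_exp_ℝ, ← Algebra.algebraMap_eq_smul_one]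
    exact (NormedSpace.algebraMap_exp_comm (-s)).symm
  have h3 : 0 ≤ exp (s • (Matrix.of T)) x y := by
    rw [exp_eq_tsum ℝ]
    show 0 ≤ (∑' (n : ℕ), ((n.factorial : ℝ))⁻¹ • (s • Matrix.of T) ^ n) x y
    have hsumm := expSeries_summable' (𝕂 := ℝ) (x := s • (Matrix.of T))
    have := (entryCLM x y).map_tsum hsumm
    rw [entryCLM_apply] at this
    rw [this]
    refine tsum_nonneg fun n => ?_
    rw [map_smul, entryCLM_apply]
    refine smul_nonneg (by positivity) ?_
    refine pow_entry_nonneg (fun i j => ?_) n x y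
    exact mul_nonneg hs (hT.1 i j)
  rw [h1, h2, mul_smul_comm, mul_one, Matrix.smul_apply]
  exact mul_nonneg (Real.exp_nonneg _) h3

lemma genMat_mulVec (T : X → X → ℝ) (v : X → ℝ) (y : X) :
    (genMat T).mulVec v y = ∑ z, T y z * v z - v y := by
  simp only [Matrix.mulVec, dotProduct, genMat, sub_mul, one_mul, ite_mul, zero_mul,
    Finset.sum_sub_distrib, Finset.sum_ite_eq, Finset.mem_univ, if_true]

lemma sum_T_sq {T : X → X → ℝ} (hT : IsStochastic T) (w : X → ℝ) (y : X) :
    ∑ z, T y z * (w z - w y) ^ 2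
      = ∑ z, T y z * w z ^ 2 - 2 * w y * (∑ z, T y z * w z) + w y ^ 2 := by
  have h1 : ∀ z ∈ Finset.univ, T y z * (w z - w y) ^ 2
      = T y z * w z ^ 2 - 2 * w y * (T y z * w z) + w y ^ 2 * T y z := fun z _ => by ring
  rw [Finset.sum_congr rfl h1]
  rw [Finset.sum_add_distrib, Finset.sum_sub_distrib, ← Finset.mul_sum, ← Finset.mul_sum, hT.2 y]
  ring

lemma gen_sq {T : X → X → ℝ} (hT : IsStochastic T) (w : X → ℝ) (y : X) :
    (genMat T).mulVec (fun z => w z ^ 2) y - 2 * w y * ((genMat T).mulVec w y)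
      = 2 * carre T w y := by
  rw [genMat_mulVec, genMat_mulVec, carre, sum_T_sq hT]
  ring

/-- Local reverse Poincaré inequality under non-negative curvature. -/
lemma local_poincare {T : X → X → ℝ} (hT : IsStochastic T)
    (hcurv : ∀ t : ℝ, 0 ≤ t → ∀ g : X → ℝ, ∀ x : X,
      carre T ((heatSG T t).mulVec g) x ≤ (heatSG T t).mulVec (carre T g) x)
    (h : X → ℝ) (o : X) {t : ℝ} (ht : 0 ≤ t) :
    (heatSG T t).mulVec (fun x => h x ^ 2) o
      ≤ ((heatSG T t).mulVec h o) ^ 2 + 2 * t * ((heatSG T t).mulVec (carre T h) o) := by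
  set L := genMat T with hL
  set C : ℝ := (heatSG T t).mulVec (carre T h) o with hC
  set w : ℝ → X → ℝ := fun s y => (heatSG T (t - s)).mulVec h y with hwdef
  set φ : ℝ → ℝ := fun s => ∑ y, heatSG T s o y * (w s y) ^ 2 with hφdef
  have hwderiv : ∀ (s : ℝ) (y : X), HasDerivAt (fun u => w u y) (-(L.mulVec (w s) y)) s := by
    intro s y
    have hz : ∀ z : X, HasDerivAt (fun u : ℝ => heatSG T (t - u) y z * h z)
        ((L * heatSG T (t - s)) y z * (-1) * h z) s := by
      intro z
      have hin : HasDerivAt (fun u : ℝ => t - u) (-1) s := by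
        simpa using (hasDerivAt_id s).const_sub t
      exact (((hasDerivAt_heatSG_entry T y z (t - s)).comp s hin)).mul_const (h z)
    have hsum := HasDerivAt.fun_sum (fun z (_ : z ∈ Finset.univ) => hz z)
    have e : -(L.mulVec (w s) y) = ∑ z, (L * heatSG T (t - s)) y z * (-1) * h z := by
      have e2 : L.mulVec (w s) = (L * heatSG T (t - s)).mulVec h := by
        rw [hwdef]
        exact Matrix.mulVec_mulVec h L (heatSG T (t - s))
      rw [e2, Matrix.mulVec, dotProduct, ← Finset.sum_neg_distrib]
      exact Finset.sum_congr rfl fun z _ => by ring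
    rw [e]
    exact hsum
  have hφderiv : ∀ s : ℝ, HasDerivAt φ (2 * ∑ y, heatSG T s o y * carre T (w s) y) s := by
    intro s
    have hy : ∀ y : X, HasDerivAt (fun u => heatSG T u o y * (w u y) ^ 2)
        ((L * heatSG T s) o y * (w s y) ^ 2
          + heatSG T s o y * (2 * (w s y) ^ 1 * (-(L.mulVec (w s) y)))) s := by
      intro y
      exact (hasDerivAt_heatSG_entry T o y s).mul ((hwderiv s y).pow 2)
    have hsum := HasDerivAt.fun_sum (fun y (_ : y ∈ Finset.univ) => hy y)
    have e : (∑ y, ((L * heatSG T s) o y * (w s y) ^ 2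
          + heatSG T s o y * (2 * (w s y) ^ 1 * (-(L.mulVec (w s) y)))))
        = 2 * ∑ y, heatSG T s o y * carre T (w s) y := by
      have e1 : ∑ y, (L * heatSG T s) o y * (w s y) ^ 2
          = ∑ y, heatSG T s o y * (L.mulVec (fun z => w s z ^ 2) y) := by
        have e0 : (L * heatSG T s).mulVec (fun z => w s z ^ 2)
            = (heatSG T s).mulVec (L.mulVec (fun z => w s z ^ 2)) := by
          rw [heatSG_comm T s, ← Matrix.mulVec_mulVec]
        have := congrFun e0 o
        simpa [Matrix.mulVec, dotProduct] using this
      rw [Finset.sum_add_distrib, e1, ← Finset.sum_add_distrib, Finset.mul_sum]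
      refine Finset.sum_congr rfl fun y _ => ?_
      rw [hL, pow_one]
      linear_combination (heatSG T s o y) * (gen_sq hT (w s) y)
    exact e ▸ hsum
  have hbound : ∀ s ∈ Set.Icc (0:ℝ) t,
      (2 * ∑ y, heatSG T s o y * carre T (w s) y) ≤ 2 * C := by
    intro s hs
    have h2 : ∑ y, heatSG T s o y * carre T (w s) y
        ≤ ∑ y, heatSG T s o y * ((heatSG T (t - s)).mulVec (carre T h) y) :=
      Finset.sum_le_sum fun y _ => mul_le_mul_of_nonneg_left
        (hcurv (t - s) (by linarith [hs.2]) h y) (heatSG_entry_nonneg hT hs.1 o y)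
    have h3 : ∑ y, heatSG T s o y * ((heatSG T (t - s)).mulVec (carre T h) y) = C := by
      have e0 : (heatSG T s).mulVec ((heatSG T (t - s)).mulVec (carre T h))
          = (heatSG T t).mulVec (carre T h) := by
        rw [Matrix.mulVec_mulVec, heatSG_mul, add_sub_cancel]
      have := congrFun e0 o
      rw [hC, ← this]
      simp [Matrix.mulVec, dotProduct]
    linarith [h2, h3.le, h3.ge]
  set ψ : ℝ → ℝ := fun s => φ s - 2 * C * s with hψdef
  have hψderiv : ∀ s : ℝ,
      HasDerivAt ψ ((2 * ∑ y, heatSG T s o y * carre T (w s) y) - 2 * C) s := by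
    intro s
    have hlin : HasDerivAt (fun s : ℝ => 2 * C * s) (2 * C) s := by
      simpa using (hasDerivAt_id s).const_mul (2 * C)
    exact (hφderiv s).sub hlin
  have hanti : AntitoneOn ψ (Set.Icc 0 t) := by
    refine antitoneOn_of_deriv_nonpos (convex_Icc 0 t) ?_ ?_ ?_
    · exact fun s _ => ((hψderiv s).continuousAt).continuousWithinAt
    · exact fun s _ => (hψderiv s).differentiableAt.differentiableWithinAt
    · intro s hs
      rw [interior_Icc] at hs
      rw [(hψderiv s).deriv]
      have := hbound s (Set.mem_Icc_of_Ioo hs)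
      linarith
  have key := hanti (Set.left_mem_Icc.mpr ht) (Set.right_mem_Icc.mpr ht) ht
  have hφ0 : φ 0 = ((heatSG T t).mulVec h o) ^ 2 := by
    rw [hφdef]
    simp only [heatSG_zero, hwdef, sub_zero, Matrix.one_apply]
    rw [Finset.sum_eq_single o]
    · simp
    · intro b _ hb; simp [Ne.symm hb]
    · intro hmem; exact absurd (Finset.mem_univ o) hmem
  have hφt : φ t = (heatSG T t).mulVec (fun x => h x ^ 2) o := by
    rw [hφdef]
    simp only [hwdef, sub_self, heatSG_zero, Matrix.one_mulVec]
    simp [Matrix.mulVec, dotProduct]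
  rw [hψdef] at key
  simp only [hφ0, hφt] at key
  rw [hφt.symm] at *
  nlinarith [key, hφ0, hφt]

/-- Fisher information dominates the carré du champ mass, up to `1 + K`. -/
lemma fisher_bound {T : X → X → ℝ} (hT : IsStochastic T)
    (pi : X → ℝ) (hpos : ∀ x, 0 < pi x)
    (hstat : ∀ y, ∑ x, pi x * T x y = pi y)
    (f : X → ℝ) (hf : ∀ x, 0 < f x) (g : X → ℝ) (hgf : ∀ z, g z = Real.log (f z)) (K : ℝ)
    (hK : ∀ x y, 0 < T x y → |g y - g x| ≤ K) :
    ∑ x, pi x * f x * carre T g x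
      ≤ (1 + K) * (-∑ x, pi x * f x * gen T g x) := by
  have hzero : ∑ x, ∑ y, pi x * T x y * (f y - f x) = 0 := by
    have h1 : ∑ x, ∑ y, pi x * T x y * f y = ∑ y, pi y * f y := by
      rw [Finset.sum_comm]
      refine Finset.sum_congr rfl fun y _ => ?_
      rw [← Finset.sum_mul, hstat y]
    have h2 : ∑ x, ∑ y, pi x * T x y * f x = ∑ x, pi x * f x := by
      refine Finset.sum_congr rfl fun x _ => ?_
      have e : ∀ y ∈ Finset.univ, pi x * T x y * f x = (pi x * f x) * T x y :=
        fun y _ => by ring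
      rw [Finset.sum_congr rfl e, ← Finset.mul_sum, hT.2 x, mul_one]
    have e : ∀ x ∈ Finset.univ, ∑ y, pi x * T x y * (f y - f x)
        = ∑ y, pi x * T x y * f y - ∑ y, pi x * T x y * f x := by
      intro x _
      rw [← Finset.sum_sub_distrib]
      exact Finset.sum_congr rfl fun y _ => by ring
    rw [Finset.sum_congr rfl e, Finset.sum_sub_distrib, h1, h2, sub_self]
  have main : ∀ x y, pi x * T x y * (f x * ((g y - g x) ^ 2 / 2))
      ≤ (1 + K) * (pi x * T x y * ((f y - f x) - f x * (g y - g x))) := by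
    intro x y
    rcases eq_or_lt_of_le (hT.1 x y) with h0 | hpos'
    · rw [← h0]; simp
    · have hu : f y = f x * Real.exp (g y - g x) := by
        rw [hgf y, hgf x]
        simp only [Real.exp_sub, Real.exp_log (hf y), Real.exp_log (hf x)]
        rw [mul_comm]; exact (div_mul_cancel₀ (f y) (hf x).ne').symm
      set u := g y - g x with hudef
      have hE : 0 ≤ Real.exp u - 1 - u := by nlinarith [Real.add_one_le_exp u]
      have h2 : (1 + |u|) * (Real.exp u - 1 - u) ≤ (1 + K) * (Real.exp u - 1 - u) :=
        mul_le_mul_of_nonneg_right (by linarith [hK x y hpos']) hE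
      have h3 : f x * (u ^ 2 / 2) ≤ f x * ((1 + K) * (Real.exp u - 1 - u)) :=
        mul_le_mul_of_nonneg_left ((scalar_ineq u).trans h2) (hf x).le
      have h4 : (f y - f x) - f x * u = f x * (Real.exp u - 1 - u) := by rw [hu]; ring
      calc pi x * T x y * (f x * (u ^ 2 / 2))
          ≤ pi x * T x y * (f x * ((1 + K) * (Real.exp u - 1 - u))) :=
            mul_le_mul_of_nonneg_left h3 (mul_nonneg (hpos x).le hpos'.le)
        _ = (1 + K) * (pi x * T x y * ((f y - f x) - f x * u)) := by rw [h4]; ring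
  have e1 : ∑ x, pi x * f x * carre T g x
      = ∑ x, ∑ y, pi x * T x y * (f x * ((g y - g x) ^ 2 / 2)) := by
    refine Finset.sum_congr rfl fun x _ => ?_
    simp only [carre, Finset.mul_sum]
    exact Finset.sum_congr rfl fun y _ => by ring
  have e2 : ∑ x, pi x * f x * gen T g x
      = ∑ x, ∑ y, pi x * T x y * (f x * (g y - g x)) := by
    refine Finset.sum_congr rfl fun x _ => ?_
    simp only [gen, Finset.mul_sum]
    exact Finset.sum_congr rfl fun y _ => by ring
  have step : ∑ x, ∑ y, pi x * T x y * (f x * ((g y - g x) ^ 2 / 2))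
      ≤ ∑ x, ∑ y, (1 + K) * (pi x * T x y * ((f y - f x) - f x * (g y - g x))) :=
    Finset.sum_le_sum fun x _ => Finset.sum_le_sum fun y _ => main x y
  have e3 : ∑ x, ∑ y, (1 + K) * (pi x * T x y * ((f y - f x) - f x * (g y - g x)))
      = (1 + K) * ((∑ x, ∑ y, pi x * T x y * (f y - f x))
          - ∑ x, ∑ y, pi x * T x y * (f x * (g y - g x))) := by
    have e : ∀ x ∈ Finset.univ, ∀ y ∈ (Finset.univ : Finset X),
        (1 + K) * (pi x * T x y * ((f y - f x) - f x * (g y - g x)))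
        = (1 + K) * (pi x * T x y * (f y - f x))
          - (1 + K) * (pi x * T x y * (f x * (g y - g x))) := fun x _ y _ => by ring
    rw [Finset.sum_congr rfl fun x hx => Finset.sum_congr rfl (e x hx)]
    simp only [Finset.sum_sub_distrib, ← Finset.mul_sum]
    ring
  rw [e1]
  refine step.trans ?_
  rw [e3, hzero, e2.symm]
  ring_nf
  exact le_rfl

end AuxLemmas

/-- Information-differential inequality: for a non-negatively curved chain
started at a deterministic point `o`, with `f_t` the density of the law at time `t > 0`,
`∑_x π(x) f_t(x) (L log f_t)(x) ≤ - Varent / (2t (1 + Lip(log f_t)))`. -/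
theorem information_differential_inequality [Fintype X] [DecidableEq X]
    (T : X → X → ℝ) (hT : IsStochastic T)
    (pi : X → ℝ) (hpos : ∀ x, 0 < pi x) (hsum : ∑ x, pi x = 1)
    (hstat : ∀ y, ∑ x, pi x * T x y = pi y)
    (hcurv : ∀ t : ℝ, 0 ≤ t → ∀ g : X → ℝ, ∀ x : X,
      carre T ((heatSG T t).mulVec g) x ≤ (heatSG T t).mulVec (carre T g) x)
    (o : X) (t : ℝ) (ht : 0 < t)
    (hft : ∀ x, 0 < evolve T (dirac o) t x / pi x) :
    ∑ x, pi x * (evolve T (dirac o) t x / pi x) *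
        gen T (fun z => Real.log (evolve T (dirac o) t z / pi z)) x ≤
      -((∑ x, pi x * (evolve T (dirac o) t x / pi x) *
            Real.log (evolve T (dirac o) t x / pi x) ^ 2) -
          (∑ x, pi x * (evolve T (dirac o) t x / pi x) *
            Real.log (evolve T (dirac o) t x / pi x)) ^ 2) /
        (2 * t * (1 + Lip T (fun z => Real.log (evolve T (dirac o) t z / pi z)))) := by
  -- notation
  set g : X → ℝ := fun z => Real.log (evolve T (dirac o) t z / pi z) with hgdef
  have hEv : ∀ x, evolve T (dirac o) t x = heatSG T t o x := by
    intro x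
    simp [evolve, dirac, Matrix.vecMul, dotProduct, ite_mul]
  have hpf : ∀ x, pi x * (evolve T (dirac o) t x / pi x) = heatSG T t o x := by
    intro x
    rw [mul_comm, div_mul_cancel₀ _ (hpos x).ne', hEv x]
  have hgx : ∀ x, Real.log (evolve T (dirac o) t x / pi x) = g x := fun x => rfl
  -- Lipschitz constant facts
  have hSsub : {r | ∃ x y, 0 < T x y ∧ r = |g x - g y|}
      ⊆ Set.range (fun p : X × X => |g p.1 - g p.2|) := by
    rintro r ⟨x, y, _, rfl⟩
    exact ⟨(x, y), rfl⟩
  have hSbdd : BddAbove {r | ∃ x y, 0 < T x y ∧ r = |g x - g y|} :=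
    ((Set.finite_range _).subset hSsub).bddAbove
  have hK : ∀ x y, 0 < T x y → |g y - g x| ≤ Lip T g := by
    intro x y hxy
    rw [abs_sub_comm]
    exact le_csSup hSbdd ⟨x, y, hxy, rfl⟩
  have hKnonneg : 0 ≤ Lip T g := by
    have hex : ∃ y, 0 < T o y := by
      by_contra hc
      push_neg at hc
      have hz : ∀ y, T o y = 0 := fun y => le_antisymm (hc y) (hT.1 o y)
      have := hT.2 o
      rw [Finset.sum_congr rfl fun y _ => hz y] at this
      simp at this
    obtain ⟨y, hy⟩ := hex
    exact le_trans (abs_nonneg _) (hK o y hy)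
  have hden : 0 < 2 * t * (1 + Lip T g) := by
    have : (0:ℝ) < 1 + Lip T g := by linarith
    positivity
  -- convert sums to semigroup form
  have hsum_g : ∑ x, pi x * (evolve T (dirac o) t x / pi x) *
      Real.log (evolve T (dirac o) t x / pi x) = (heatSG T t).mulVec g o := by
    show _ = ∑ x, heatSG T t o x * g x
    exact Finset.sum_congr rfl fun x _ => by rw [hgx x, hpf x]
  have hsum_g2 : ∑ x, pi x * (evolve T (dirac o) t x / pi x) *
      Real.log (evolve T (dirac o) t x / pi x) ^ 2
      = (heatSG T t).mulVec (fun x => g x ^ 2) o := by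
    show _ = ∑ x, heatSG T t o x * g x ^ 2
    exact Finset.sum_congr rfl fun x _ => by rw [hgx x, hpf x]
  have hsum_carre : ∑ x, pi x * (evolve T (dirac o) t x / pi x) * carre T g x
      = (heatSG T t).mulVec (carre T g) o := by
    show _ = ∑ x, heatSG T t o x * carre T g x
    exact Finset.sum_congr rfl fun x _ => by rw [hpf x]
  -- local reverse Poincaré: varentropy ≤ 2t ⟨μ_t, Γ g⟩
  have hpoin := local_poincare hT hcurv g o ht.le
  -- Fisher bound
  have hfish := fisher_bound hT pi hpos hstat
    (fun x => evolve T (dirac o) t x / pi x) hft g (fun z => rfl) (Lip T g) hK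
  rw [hsum_carre] at hfish
  -- assemble
  rw [hsum_g, hsum_g2]
  rw [le_div_iff₀ hden] at *
  · nlinarith [hpoin, hfish, ht.le,
      mul_le_mul_of_nonneg_left hfish (by linarith : (0:ℝ) ≤ 2 * t)]
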